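/- Let m be a matrix over a field with columns indexed by a linearly ordered set. Define r(m)_l as the rank of the submatrix consisting of the first l columns, and R(m) = {l : r(m)_l > r(m)_{l-1}}. Then for two matrices m and n with the same number of columns and equal rank, R(m) ≤_lex R(n) holds if and only if r(m) ≥_lex r(n) (lexicographic comparison of the rank sequences). -/

import Mathlib

open Finset
open scoped symmDiff

/-- `r(m)_l`: the rank of the submatrix consisting of the first `l` columns. -/
noncomputable def rseq {F : Type*} [Field F] {ι : Type*} [Fintype ι] {N : ℕ}
    (m : Matrix ι (Fin N) F) (l : ℕ) : ℕ :=
  (m.submatrix id (fun j : {j : Fin N // (j : ℕ) < l} => (j : Fin N))).rank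

open Classical in
/-- `R(m)`: the set of column indices where the rank sequence steps up. -/
noncomputable def Rset {F : Type*} [Field F] {ι : Type*} [Fintype ι] {N : ℕ}
    (m : Matrix ι (Fin N) F) : Finset (Fin N) :=
  Finset.univ.filter fun l => rseq m (l : ℕ) < rseq m ((l : ℕ) + 1)

/-- Lexicographic strict order on finsets: `s <lex t` iff the minimum of the
symmetric difference `s ∆ t` belongs to `s`. -/
def lexLt {N : ℕ} (s t : Finset (Fin N)) : Prop :=
  ∃ a, a ∈ s \ t ∧ ∀ b ∈ s ∆ t, a ≤ b

/-- Strict lexicographic comparison of the rank sequences `f, g` on `0,…,N`. -/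
def seqLexLt (f g : ℕ → ℕ) (N : ℕ) : Prop :=
  ∃ l ≤ N, f l < g l ∧ ∀ l' < l, f l' = g l'

/-- Weak lexicographic comparison of sequences on `0,…,N`. -/
def seqLexLe (f g : ℕ → ℕ) (N : ℕ) : Prop :=
  (∀ l ≤ N, f l = g l) ∨ seqLexLt f g N

section Aux

open Matrix

variable {F : Type*} [Field F] {ι : Type*} [Fintype ι] {N : ℕ}

lemma rseq_eq (m : Matrix ι (Fin N) F) (l : ℕ) :
    rseq m l = Module.finrank F (Submodule.span F (mᵀ '' {j : Fin N | (j : ℕ) < l})) := by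
  have hr : Set.range (m.submatrix id fun j : {j : Fin N // (j:ℕ) < l} => (j : Fin N)).col
      = mᵀ '' {j : Fin N | (j : ℕ) < l} := by
    ext v; constructor
    · rintro ⟨j, rfl⟩; exact ⟨j.1, j.2, rfl⟩
    · rintro ⟨j, hj, rfl⟩; exact ⟨⟨j, hj⟩, rfl⟩
  rw [rseq, Matrix.rank_eq_finrank_span_cols, hr]

lemma rseq_mono (m : Matrix ι (Fin N) F) {l l' : ℕ} (h : l ≤ l') :
    rseq m l ≤ rseq m l' := by
  rw [rseq_eq, rseq_eq]
  exact Submodule.finrank_mono (Submodule.span_mono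
    (Set.image_mono fun j hj => lt_of_lt_of_le hj h))

lemma rseq_succ_le (m : Matrix ι (Fin N) F) {l : ℕ} (h : l < N) :
    rseq m (l + 1) ≤ rseq m l + 1 := by
  rw [rseq_eq, rseq_eq]
  have hset : {j : Fin N | (j:ℕ) < l + 1} = insert (⟨l, h⟩ : Fin N) {j : Fin N | (j:ℕ) < l} := by
    ext j; simp [Fin.ext_iff]; omega
  rw [hset, show mᵀ '' insert (⟨l, h⟩ : Fin N) {j : Fin N | (j:ℕ) < l}
      = insert (mᵀ ⟨l, h⟩) (mᵀ '' {j : Fin N | (j:ℕ) < l}) from Set.image_insert_eq,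
    Submodule.span_insert]
  refine le_trans (Submodule.finrank_add_le_finrank_add_finrank _ _) ?_
  have h1 : Module.finrank F (F ∙ mᵀ (⟨l, h⟩ : Fin N)) ≤ 1 := by
    by_cases hz : mᵀ (⟨l, h⟩ : Fin N) = 0
    · rw [hz, Submodule.span_zero_singleton, finrank_bot]; omega
    · rw [finrank_span_singleton hz]
  omega

lemma rseq_zero (m : Matrix ι (Fin N) F) : rseq m 0 = 0 := by
  haveI : IsEmpty {j : Fin N // (j : ℕ) < 0} := ⟨fun j => Nat.not_lt_zero _ j.2⟩
  have := Matrix.rank_le_card_width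
    (m.submatrix id (fun j : {j : Fin N // (j : ℕ) < 0} => (j : Fin N)))
  simpa [rseq] using this

/-- Counting step: the number of elements below `l+1` is the number below `l`,
plus one if `⟨l, h⟩` is in the set. -/
lemma cnt_succ (s : Finset (Fin N)) {l : ℕ} (h : l < N) :
    (s.filter fun j : Fin N => (j:ℕ) < l + 1).card
      = (s.filter fun j : Fin N => (j:ℕ) < l).card + (if (⟨l, h⟩ : Fin N) ∈ s then 1 else 0) := by
  have hsplit : (s.filter fun j : Fin N => (j:ℕ) < l + 1)
      = (s.filter fun j : Fin N => (j:ℕ) < l) ∪ (s.filter fun j : Fin N => j = (⟨l, h⟩ : Fin N)) := by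
    ext j
    by_cases hj : j ∈ s <;> simp [hj, Fin.ext_iff] <;> omega
  have hdisj : Disjoint (s.filter fun j : Fin N => (j:ℕ) < l)
      (s.filter fun j : Fin N => j = (⟨l, h⟩ : Fin N)) := by
    rw [Finset.disjoint_left]
    intro a ha hb
    rw [Finset.mem_filter] at ha hb
    rw [hb.2] at ha
    exact absurd ha.2 (by simp)
  rw [hsplit, Finset.card_union_of_disjoint hdisj, Finset.filter_eq']
  split <;> simp

lemma rseq_eq_cnt (m : Matrix ι (Fin N) F) :
    ∀ l, rseq m l = ((Rset m).filter fun j : Fin N => (j:ℕ) < l).card := by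
  intro l
  induction l with
  | zero =>
    rw [rseq_zero]
    rw [eq_comm, Finset.card_eq_zero, Finset.filter_eq_empty_iff]
    intro j _; simp
  | succ l ih =>
    by_cases h : l < N
    · rw [cnt_succ _ h]
      have h1 := rseq_mono m (Nat.le_succ l)
      have h2 := rseq_succ_le m h
      have hx : (⟨l, h⟩ : Fin N) ∈ Rset m ↔ rseq m l < rseq m (l + 1) := by
        simp [Rset]
      have hsucc : rseq m l.succ = rseq m (l + 1) := rfl
      by_cases hmem : (⟨l, h⟩ : Fin N) ∈ Rset m
      · have := hx.mp hmem
        rw [if_pos hmem]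
        omega
      · have : ¬ rseq m l < rseq m (l + 1) := fun hc => hmem (hx.mpr hc)
        rw [if_neg hmem]
        omega
    · push_neg at h
      have hflt : ((Rset m).filter fun j : Fin N => (j:ℕ) < l + 1)
          = ((Rset m).filter fun j : Fin N => (j:ℕ) < l) := by
        apply Finset.filter_congr
        intro j _
        have := j.isLt
        omega
      have hset : {j : Fin N | (j:ℕ) < l + 1} = {j : Fin N | (j:ℕ) < l} := by
        ext j; have := j.isLt; simp; omega
      rw [hflt, ← ih, rseq_eq, rseq_eq, hset]

/-- If `a` is a lower bound for `s ∆ t`, then `s` and `t` agree below `a`. -/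
lemma filter_eq_of_min {s t : Finset (Fin N)} {a : Fin N}
    (hmin : ∀ b ∈ s ∆ t, a ≤ b) {l : ℕ} (hl : l ≤ (a:ℕ)) :
    s.filter (fun j : Fin N => (j:ℕ) < l) = t.filter (fun j : Fin N => (j:ℕ) < l) := by
  ext j
  simp only [Finset.mem_filter, and_congr_left_iff]
  intro hjl
  by_contra hne
  have hmem : j ∈ s ∆ t := by
    rw [Finset.mem_symmDiff]
    tauto
  have := hmin j hmem
  have : (a:ℕ) ≤ (j:ℕ) := this
  omega

lemma lexLt_seq {s t : Finset (Fin N)} {a : Fin N} (has : a ∈ s) (hat : a ∉ t)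
    (hmin : ∀ b ∈ s ∆ t, a ≤ b) :
    seqLexLt (fun l => (t.filter fun j : Fin N => (j:ℕ) < l).card)
      (fun l => (s.filter fun j : Fin N => (j:ℕ) < l).card) N := by
  refine ⟨(a:ℕ) + 1, a.isLt, ?_, ?_⟩
  · beta_reduce
    rw [cnt_succ s a.isLt, cnt_succ t a.isLt]
    have heq := filter_eq_of_min hmin (le_refl (a:ℕ))
    rw [heq]
    simp only [Fin.eta, has, hat, if_true, if_false]
    omega
  · intro l' hl'
    beta_reduce
    rw [filter_eq_of_min hmin (Nat.lt_succ_iff.mp hl')]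

lemma cnt_main (s t : Finset (Fin N)) :
    (s = t ∨ lexLt s t) ↔
      seqLexLe (fun l => (t.filter fun j : Fin N => (j:ℕ) < l).card)
        (fun l => (s.filter fun j : Fin N => (j:ℕ) < l).card) N := by
  constructor
  · rintro (rfl | ⟨a, ha, hmin⟩)
    · exact Or.inl fun l _ => rfl
    · rw [Finset.mem_sdiff] at ha
      exact Or.inr (lexLt_seq ha.1 ha.2 hmin)
  · intro hle
    by_cases hst : s = t
    · exact Or.inl hst
    · have hne : (s ∆ t).Nonempty := by
        rw [Finset.nonempty_iff_ne_empty]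
        intro hemp
        apply hst
        ext x
        have hx : x ∉ s ∆ t := by rw [hemp]; exact Finset.notMem_empty x
        rw [Finset.mem_symmDiff] at hx
        push_neg at hx
        tauto
      have hmem := (s ∆ t).min'_mem hne
      have hmin : ∀ b ∈ s ∆ t, (s ∆ t).min' hne ≤ b := fun b hb => (s ∆ t).min'_le b hb
      set a := (s ∆ t).min' hne with ha
      rw [Finset.mem_symmDiff] at hmem
      rcases hmem with ⟨has, hat⟩ | ⟨hat, has⟩
      · exact Or.inr ⟨a, Finset.mem_sdiff.mpr ⟨has, hat⟩, hmin⟩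
      · exfalso
        have hmin' : ∀ b ∈ t ∆ s, a ≤ b := by
          intro b hb; exact hmin b (by rwa [symmDiff_comm])
        have hstrict := lexLt_seq hat has hmin'
        obtain ⟨l, hlN, hlt, hbefore⟩ := hstrict
        rcases hle with heq | ⟨l₂, hl₂N, hlt₂, hbefore₂⟩
        · have := heq l hlN; omega
        · rcases lt_trichotomy l l₂ with hc | rfl | hc
          · have := hbefore₂ l hc; omega
          · omega
          · have := hbefore l₂ hc; omega

end Aux

/-- For matrices `m, m'` with the same (ordered) column index set and equal
rank, `R(m) ≤lex R(m')` holds iff `r(m) ≥lex r(m')`. -/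
theorem Rset_lexLe_iff_rseq_lexGe {F : Type*} [Field F] {ι₁ ι₂ : Type*}
    [Fintype ι₁] [Fintype ι₂] {N : ℕ}
    (m : Matrix ι₁ (Fin N) F) (m' : Matrix ι₂ (Fin N) F)
    (hrk : m.rank = m'.rank) :
    (Rset m = Rset m' ∨ lexLt (Rset m) (Rset m')) ↔
      seqLexLe (rseq m') (rseq m) N := by
  have hm : rseq m = fun l => ((Rset m).filter fun j : Fin N => (j:ℕ) < l).card :=
    funext (rseq_eq_cnt m)
  have hm' : rseq m' = fun l => ((Rset m').filter fun j : Fin N => (j:ℕ) < l).card :=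
    funext (rseq_eq_cnt m')
  rw [hm, hm']
  exact cnt_main (Rset m) (Rset m')
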